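/- Let S be an su(2) block for ψ. Then K_ψ decomposes as the internal direct sum K_ψ = (K_ψ ∩ g_S) ⊕ (K_ψ ∩ ḡ_S); that is, every element of K_ψ is the sum of an element of K_ψ ∩ g_S and an element of K_ψ ∩ ḡ_S, and (K_ψ ∩ g_S) ∩ (K_ψ ∩ ḡ_S) = 0. -/

import Mathlib

open scoped Matrix

noncomputable section

/-- The `n`-qubit Hilbert space `(ℂ²)^{⊗n}`, realized as functions `(Fin n → Fin 2) → ℂ`. -/
abbrev QState (n : ℕ) := (Fin n → Fin 2) → ℂ

/-- The ambient real vector space `ℝ × (Fin n → M₂(ℂ))` containing `u(1) ⊕ su(2)^n`. -/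
abbrev GV (n : ℕ) := ℝ × (Fin n → Matrix (Fin 2) (Fin 2) ℂ)

/-- `su(2)`: traceless skew-Hermitian `2 × 2` complex matrices, as a real subspace. -/
def su2 : Submodule ℝ (Matrix (Fin 2) (Fin 2) ℂ) where
  carrier := {X | Xᴴ = -X ∧ X.trace = 0}
  add_mem' := by
    rintro X Y ⟨hX1, hX2⟩ ⟨hY1, hY2⟩
    exact ⟨by rw [Matrix.conjTranspose_add, hX1, hY1, neg_add],
           by rw [Matrix.trace_add, hX2, hY2, add_zero]⟩
  zero_mem' := ⟨by simp, by simp⟩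
  smul_mem' := by
    rintro r X ⟨hX1, hX2⟩
    exact ⟨by rw [Matrix.conjTranspose_smul, hX1, star_trivial, smul_neg],
           by rw [Matrix.trace_smul, hX2, smul_zero]⟩

/-- The Lie algebra `g = u(1) ⊕ su(2)^n` as a real subspace of `GV n`. -/
def gSub (n : ℕ) : Submodule ℝ (GV n) :=
  (⊤ : Submodule ℝ ℝ).prod (Submodule.pi Set.univ fun _ => su2)

/-- `g_S`: elements `(0, X)` of `g` with `X j = 0` for `j ∉ S`. -/
def gS {n : ℕ} (S : Set (Fin n)) : Submodule ℝ (GV n) :=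
  (⊥ : Submodule ℝ ℝ).prod (Submodule.pi Set.univ fun j =>
    letI := Classical.dec (j ∈ S)
    if j ∈ S then su2 else ⊥)

/-- `ḡ_S`: elements `(t, X)` of `g` with `X j = 0` for `j ∈ S`. -/
def gBar {n : ℕ} (S : Set (Fin n)) : Submodule ℝ (GV n) :=
  (⊤ : Submodule ℝ ℝ).prod (Submodule.pi Set.univ fun j =>
    letI := Classical.dec (j ∈ S)
    if j ∈ S then (⊥ : Submodule ℝ (Matrix (Fin 2) (Fin 2) ℂ)) else su2)

/-- The projection `P_j : g → su(2)`, `(t, X) ↦ X j`. -/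
def Pj {n : ℕ} (j : Fin n) : GV n →ₗ[ℝ] Matrix (Fin 2) (Fin 2) ℂ :=
  (LinearMap.proj j).comp (LinearMap.snd ℝ ℝ (Fin n → Matrix (Fin 2) (Fin 2) ℂ))

/-- Apply the matrix `X` to qubit `j` of the state `ψ`. -/
def applySingle {n : ℕ} (j : Fin n) (X : Matrix (Fin 2) (Fin 2) ℂ) (ψ : QState n) : QState n :=
  fun I => ∑ k : Fin 2, X (I j) k * ψ (Function.update I j k)

/-- The infinitesimal local-unitary action: `dΦ_ψ(t, X) = i t ψ + Σ_j X_j ψ`. -/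
def dPhi {n : ℕ} (ψ : QState n) : GV n →ₗ[ℝ] QState n where
  toFun x := fun I => Complex.I * (x.1 : ℂ) * ψ I + ∑ j, applySingle j (x.2 j) ψ I
  map_add' x y := by
    funext I
    simp only [applySingle, Prod.fst_add, Prod.snd_add, Pi.add_apply, Matrix.add_apply,
      Complex.ofReal_add, add_mul, Finset.sum_add_distrib]
    ring
  map_smul' r x := by
    funext I
    simp only [applySingle, Prod.smul_fst, Prod.smul_snd, Pi.smul_apply, Matrix.smul_apply,
      smul_eq_mul, Complex.real_smul, Complex.ofReal_mul, RingHom.id_apply,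
      Finset.mul_sum, mul_add]
    congr 1
    · ring
    · refine Finset.sum_congr rfl fun j _ => Finset.sum_congr rfl fun k _ => by ring

/-- The stabilizer subalgebra `K_ψ = {(t,X) ∈ g : dΦ_ψ(t,X) = 0}`. -/
def stab {n : ℕ} (ψ : QState n) : Submodule ℝ (GV n) :=
  gSub n ⊓ LinearMap.ker (dPhi ψ)

/-- The componentwise bracket on `g` (zero in the `u(1)` component). -/
def gBracket {n : ℕ} (x y : GV n) : GV n :=
  (0, fun j => ⁅x.2 j, y.2 j⁆)

/-- An `su(2)` block for `ψ`: a set `S` of qubits with `dim (K_ψ ∩ g_S) > 1` and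
`dim (K_ψ ∩ g_{S'}) = 0` for every proper subset `S' ⊊ S`. -/
def Su2Block {n : ℕ} (ψ : QState n) (S : Set (Fin n)) : Prop :=
  1 < Module.finrank ℝ ↥(stab ψ ⊓ gS S) ∧
  ∀ S' : Set (Fin n), S' ⊂ S → Module.finrank ℝ ↥(stab ψ ⊓ gS S') = 0

/-- The union `B` of all `su(2)` blocks for `ψ`. -/
def blockUnion {n : ℕ} (ψ : QState n) : Set (Fin n) :=
  {q | ∃ S : Set (Fin n), Su2Block ψ S ∧ q ∈ S}

/-- The number `p` of `su(2)` blocks for `ψ`. -/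
def blockCount {n : ℕ} (ψ : QState n) : ℕ :=
  {S : Set (Fin n) | Su2Block ψ S}.ncard

/-- `ψ` factors across the set `S` of qubits: `ψ(I) = φ(I|_S) · χ(I|_{Sᶜ})`. -/
def FactorsAcross {n : ℕ} (ψ : QState n) (S : Set (Fin n)) : Prop :=
  ∃ (φ : (↥S → Fin 2) → ℂ) (χ : (↥(Sᶜ) → Fin 2) → ℂ),
    ∀ I : Fin n → Fin 2, ψ I = φ (fun j => I j.1) * χ (fun j => I j.1)

/-- `ψ` is a nonproduct state: it factors across no proper nonempty set of qubits. -/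
def IsNonproduct {n : ℕ} (ψ : QState n) : Prop :=
  ∀ S : Set (Fin n), S ≠ ∅ → S ≠ Set.univ → ¬ FactorsAcross ψ S

/-- `ψ` has a single-qubit factor. -/
def HasSingleQubitFactor {n : ℕ} (ψ : QState n) : Prop :=
  ∃ j : Fin n, FactorsAcross ψ {j}

/-- Apply the local unitary (or just local linear) transformation `⊗_j U_j` to `ψ`. -/
def luApply {n : ℕ} (U : Fin n → Matrix (Fin 2) (Fin 2) ℂ) (ψ : QState n) : QState n :=
  fun I => ∑ J : Fin n → Fin 2, (∏ j, U j (I j) (J j)) * ψ J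

/-- Local unitary equivalence of `n`-qubit states. -/
def LUEquiv {n : ℕ} (ψ ψ' : QState n) : Prop :=
  ∃ U : Fin n → Matrix (Fin 2) (Fin 2) ℂ,
    (∀ j, U j ∈ Matrix.unitaryGroup (Fin 2) ℂ) ∧ ψ' = luApply U ψ

/-- The two-qubit singlet state `φ(a,b) = δ_{a0} δ_{b1} − δ_{a1} δ_{b0}`. -/
def singletFn : Fin 2 → Fin 2 → ℂ := fun a b =>
  if a = 0 ∧ b = 1 then 1 else if a = 1 ∧ b = 0 then -1 else 0

/-- `ψ` has a singlet factor: it is LU-equivalent to a state that factors across a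
two-element set of qubits, with the two-qubit factor being the singlet. -/
def HasSingletFactor {n : ℕ} (ψ : QState n) : Prop :=
  ∃ ψ' : QState n, LUEquiv ψ ψ' ∧ ∃ j k : Fin n, j ≠ k ∧
    ∃ χ : (↥(({j, k} : Set (Fin n))ᶜ) → Fin 2) → ℂ,
      ∀ I : Fin n → Fin 2, ψ' I = singletFn (I j) (I k) * χ (fun q => I q.1)

/-- The matrix `A = diag(i, −i) ∈ su(2)`. -/
def matA : Matrix (Fin 2) (Fin 2) ℂ := !![Complex.I, 0; 0, -Complex.I]

/-- The generalized `n`-qubit GHZ state `α|0…0⟩ + β|1…1⟩`. -/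
def ghz (n : ℕ) (α β : ℂ) : QState n := fun I =>
  if ∀ j, I j = 0 then α else if ∀ j, I j = 1 then β else 0

/-- parametrization of su2 -/
def ofCo (a b c : ℝ) : Matrix (Fin 2) (Fin 2) ℂ :=
  !![(a : ℂ) * Complex.I, (b : ℂ) + (c : ℂ) * Complex.I;
     -(b : ℂ) + (c : ℂ) * Complex.I, -((a : ℂ) * Complex.I)]

lemma ofCo_mem (a b c : ℝ) : ofCo a b c ∈ su2 := by
  constructor
  · ext i j
    fin_cases i <;> fin_cases j <;>
      simp [ofCo, Matrix.conjTranspose_apply, Complex.ext_iff]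
  · simp [ofCo, Matrix.trace_fin_two]

lemma su2_repr {X : Matrix (Fin 2) (Fin 2) ℂ} (hX : X ∈ su2) :
    X = ofCo (X 0 0).im (X 0 1).re (X 0 1).im := by
  obtain ⟨h1, h2⟩ := hX
  have h00 : (X 0 0).re = 0 := by
    have := congrFun (congrFun h1 0) 0
    simp [Matrix.conjTranspose_apply, Complex.ext_iff] at this
    linarith [this]
  have h10 : X 1 0 = -(starRingEnd ℂ) (X 0 1) := by
    have := congrFun (congrFun h1 0) 1
    simp only [Matrix.conjTranspose_apply, Matrix.neg_apply] at this
    have := congrArg (starRingEnd ℂ) this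
    simpa using this
  have h11 : X 1 1 = -(X 0 0) := by
    rw [Matrix.trace_fin_two] at h2; linear_combination h2
  have e00 : X 0 0 = ((X 0 0).im : ℂ) * Complex.I := by
    rw [Complex.ext_iff]; constructor <;> simp [h00]
  have e01 : X 0 1 = ((X 0 1).re : ℂ) + ((X 0 1).im : ℂ) * Complex.I := by
    rw [Complex.ext_iff]; constructor <;> simp
  have e10 : -(starRingEnd ℂ) (X 0 1)
      = -((X 0 1).re : ℂ) + ((X 0 1).im : ℂ) * Complex.I := by
    rw [Complex.ext_iff]; constructor <;> simp
  ext i j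
  fin_cases i <;> fin_cases j <;> simp only [Fin.mk_zero, Fin.mk_one, Fin.isValue]
  · rw [e00]; simp [ofCo]
  · rw [e01]; simp [ofCo]
  · rw [h10, e10]; simp [ofCo]
  · rw [h11, e00]; simp [ofCo]

lemma ofCo_co (a b c : ℝ) :
    ((ofCo a b c) 0 0).im = a ∧ ((ofCo a b c) 0 1).re = b ∧ ((ofCo a b c) 0 1).im = c := by
  refine ⟨?_, ?_, ?_⟩ <;> simp [ofCo]

lemma ofCo_inj {a b c d e f : ℝ} (h : ofCo a b c = ofCo d e f) :
    a = d ∧ b = e ∧ c = f := by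
  have h1 := congrFun (congrFun h 0) 0
  have h2 := congrFun (congrFun h 0) 1
  simp [ofCo, Complex.ext_iff] at h1 h2
  exact ⟨by linarith [h1], h2.1, h2.2⟩

lemma ofCo_add (a b c d e f : ℝ) :
    ofCo a b c + ofCo d e f = ofCo (a + d) (b + e) (c + f) := by
  ext i j
  fin_cases i <;> fin_cases j <;> simp [ofCo, Complex.ext_iff] <;>
    first
      | (refine ⟨by ring, by ring⟩)
      | ring
      | rfl

lemma ofCo_smul (r a b c : ℝ) :
    r • ofCo a b c = ofCo (r * a) (r * b) (r * c) := by
  ext i j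
  fin_cases i <;> fin_cases j <;>
    simp [ofCo, Complex.ext_iff, Complex.real_smul] <;> first
      | (refine ⟨by ring, by ring⟩)
      | ring
      | rfl

lemma ofCo_bracket (a b c d e f : ℝ) :
    ofCo a b c * ofCo d e f - ofCo d e f * ofCo a b c
      = ofCo (2*(b*f - c*e)) (2*(c*d - a*f)) (2*(a*e - b*d)) := by
  ext i j
  fin_cases i <;> fin_cases j <;>
    simp [ofCo, Matrix.mul_apply, Fin.sum_univ_two, Complex.ext_iff] <;>
    first
      | (refine ⟨by ring, by ring⟩)
      | ring
      | rfl

lemma ofCo_zero : ofCo 0 0 0 = 0 := by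
  ext i j; fin_cases i <;> fin_cases j <;> simp [ofCo]

lemma ofCo_eq_zero {a b c : ℝ} (h : ofCo a b c = 0) : a = 0 ∧ b = 0 ∧ c = 0 := by
  rw [← ofCo_zero] at h; exact ofCo_inj h

/-- su2 is centerless. -/
lemma su2_centerless {X : Matrix (Fin 2) (Fin 2) ℂ} (hX : X ∈ su2)
    (h : ∀ Y ∈ su2, X * Y - Y * X = 0) : X = 0 := by
  obtain ⟨a, b, c, rfl⟩ : ∃ a b c, X = ofCo a b c := ⟨_, _, _, su2_repr hX⟩
  have h1 := h (ofCo 1 0 0) (ofCo_mem 1 0 0)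
  have h2 := h (ofCo 0 1 0) (ofCo_mem 0 1 0)
  rw [ofCo_bracket, ← ofCo_zero] at h1 h2
  obtain ⟨e1, e2, e3⟩ := ofCo_inj h1
  obtain ⟨f1, f2, f3⟩ := ofCo_inj h2
  rw [show a = 0 by linarith, show b = 0 by linarith, show c = 0 by linarith, ofCo_zero]

/-- commuting elements of su2 are parallel -/
lemma su2_parallel {a b c d e f : ℝ} (hu : ofCo a b c ≠ 0)
    (h : ofCo a b c * ofCo d e f - ofCo d e f * ofCo a b c = 0) :
    ∃ r : ℝ, ofCo d e f = r • ofCo a b c := by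
  rw [ofCo_bracket, ← ofCo_zero] at h
  obtain ⟨h1, h2, h3⟩ := ofCo_inj h
  have hne : a ^ 2 + b ^ 2 + c ^ 2 ≠ 0 := by
    intro hz
    exact hu (by rw [show a = 0 by nlinarith, show b = 0 by nlinarith,
      show c = 0 by nlinarith, ofCo_zero])
  refine ⟨(a * d + b * e + c * f) / (a ^ 2 + b ^ 2 + c ^ 2), ?_⟩
  rw [ofCo_smul]
  have key : ∀ x y z : ℝ, x * (a ^ 2 + b ^ 2 + c ^ 2) = (a * d + b * e + c * f) * y →
      x = (a * d + b * e + c * f) / (a ^ 2 + b ^ 2 + c ^ 2) * y := by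
    intro x y z hxy
    field_simp
    linarith [hxy]
  have ed : d = (a * d + b * e + c * f) / (a ^ 2 + b ^ 2 + c ^ 2) * a := by
    apply key _ _ 0; linear_combination (c/2) * h2 - (b/2) * h3
  have ee : e = (a * d + b * e + c * f) / (a ^ 2 + b ^ 2 + c ^ 2) * b := by
    apply key _ _ 0; linear_combination (a/2) * h3 - (c/2) * h1
  have ef : f = (a * d + b * e + c * f) / (a ^ 2 + b ^ 2 + c ^ 2) * c := by
    apply key _ _ 0; linear_combination (b/2) * h1 - (a/2) * h2
  rw [← ed, ← ee, ← ef]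

/-- linear map realizing the parametrization -/
def toSu2 : (Fin 3 → ℝ) →ₗ[ℝ] Matrix (Fin 2) (Fin 2) ℂ where
  toFun v := ofCo (v 0) (v 1) (v 2)
  map_add' u v := by simp [← ofCo_add]
  map_smul' r v := by simp [ofCo_smul]

lemma su2_le_range : su2 ≤ LinearMap.range toSu2 := by
  intro X hX
  exact ⟨![(X 0 0).im, (X 0 1).re, (X 0 1).im], (su2_repr hX).symm⟩

lemma finrank_su2_le : Module.finrank ℝ su2 ≤ 3 := by
  calc Module.finrank ℝ su2 ≤ Module.finrank ℝ (LinearMap.range toSu2) :=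
        Submodule.finrank_mono su2_le_range
    _ ≤ Module.finrank ℝ (Fin 3 → ℝ) := LinearMap.finrank_range_le toSu2
    _ = 3 := by simp

lemma sumsq {x y z : ℝ} (h : x ^ 2 + y ^ 2 + z ^ 2 = 0) : x = 0 ∧ y = 0 ∧ z = 0 := by
  refine ⟨?_, ?_, ?_⟩ <;>
    [exact sq_eq_zero_iff.mp (le_antisymm (by linarith [sq_nonneg y, sq_nonneg z]) (sq_nonneg x));
     exact sq_eq_zero_iff.mp (le_antisymm (by linarith [sq_nonneg x, sq_nonneg z]) (sq_nonneg y));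
     exact sq_eq_zero_iff.mp (le_antisymm (by linarith [sq_nonneg x, sq_nonneg y]) (sq_nonneg z))]

lemma su2_subalg {L : Submodule ℝ (Matrix (Fin 2) (Fin 2) ℂ)} (hL : L ≤ su2)
    (hbr : ∀ X ∈ L, ∀ Y ∈ L, X * Y - Y * X ∈ L) (hd : 1 < Module.finrank ℝ L) :
    L = su2 := by
  have hLbot : L ≠ ⊥ := by
    intro h
    rw [h] at hd
    simp at hd
  obtain ⟨u, huL, hu0⟩ := Submodule.ne_bot_iff L |>.mp hLbot
  have hnotle : ¬ L ≤ Submodule.span ℝ {u} := by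
    intro h
    have := Submodule.finrank_mono (R := ℝ) h
    rw [finrank_span_singleton hu0] at this
    omega
  obtain ⟨v, hvL, hv⟩ := SetLike.not_le_iff_exists.mp hnotle
  obtain ⟨a, b, c, hua⟩ : ∃ a b c, u = ofCo a b c := ⟨_, _, _, su2_repr (hL huL)⟩
  obtain ⟨d, e, f, hva⟩ : ∃ d e f, v = ofCo d e f := ⟨_, _, _, su2_repr (hL hvL)⟩
  set w := u * v - v * u with hw
  have hwL : w ∈ L := hbr u huL v hvL
  have hw0 : w ≠ 0 := by
    intro h
    rw [hw, hua, hva] at h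
    obtain ⟨r, hr⟩ := su2_parallel (hua ▸ hu0) h
    exact hv (Submodule.mem_span_singleton.mpr ⟨r, by rw [hva, hr, hua]⟩)
  have hwco : w = ofCo (2*(b*f - c*e)) (2*(c*d - a*f)) (2*(a*e - b*d)) := by
    rw [hw, hua, hva, ofCo_bracket]
  have hwnot : w ∉ Submodule.span ℝ {u, v} := by
    intro h
    obtain ⟨α, β, hαβ⟩ := Submodule.mem_span_pair.mp h
    rw [hua, hva, ofCo_smul, ofCo_smul, ofCo_add, hwco] at hαβ
    obtain ⟨h1, h2, h3⟩ := ofCo_inj hαβ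
    apply hw0
    have k1 : (2*(b*f - c*e)) * a + (2*(c*d - a*f)) * b + (2*(a*e - b*d)) * c = 0 := by ring
    have k2 : (2*(b*f - c*e)) * d + (2*(c*d - a*f)) * e + (2*(a*e - b*d)) * f = 0 := by ring
    have hsq : (2*(b*f - c*e))^2 + (2*(c*d - a*f))^2 + (2*(a*e - b*d))^2 = 0 := by
      have expand : (2*(b*f - c*e))^2 + (2*(c*d - a*f))^2 + (2*(a*e - b*d))^2
          = α * ((2*(b*f - c*e)) * a + (2*(c*d - a*f)) * b + (2*(a*e - b*d)) * c)
          + β * ((2*(b*f - c*e)) * d + (2*(c*d - a*f)) * e + (2*(a*e - b*d)) * f) := by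
        rw [← h1, ← h2, ← h3]; ring
      rw [expand, k1, k2]; ring
    obtain ⟨z1, z2, z3⟩ := sumsq hsq
    rw [hwco, z1, z2, z3, ofCo_zero]
  -- chain of strict inclusions
  have c1 : (⊥ : Submodule ℝ (Matrix (Fin 2) (Fin 2) ℂ)) < Submodule.span ℝ {u} := by
    rw [bot_lt_iff_ne_bot, Ne, Submodule.span_singleton_eq_bot]
    exact hu0
  have c2 : Submodule.span ℝ {u} < Submodule.span ℝ {u, v} := by
    refine lt_of_le_of_ne (Submodule.span_mono (by simp)) fun h => ?_
    exact hv (h ▸ Submodule.subset_span (by simp))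
  have c3 : Submodule.span ℝ {u, v} < Submodule.span ℝ {u, v, w} := by
    refine lt_of_le_of_ne (Submodule.span_mono (by intro x hx; simp at hx; rcases hx with h|h <;> simp [h])) fun h => ?_
    exact hwnot (h ▸ Submodule.subset_span (by simp))
  have hle : Submodule.span ℝ {u, v, w} ≤ L := by
    rw [Submodule.span_le]
    intro x hx
    rcases hx with h | h | h <;> simp_all
  have h3le : 3 ≤ Module.finrank ℝ (Submodule.span ℝ {u, v, w}) := by
    have i1 := Submodule.finrank_lt_finrank_of_lt c1
    have i2 := Submodule.finrank_lt_finrank_of_lt c2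
    have i3 := Submodule.finrank_lt_finrank_of_lt c3
    rw [finrank_bot] at i1
    omega
  exact (Submodule.eq_of_le_of_finrank_le hL
    (finrank_su2_le.trans (h3le.trans (Submodule.finrank_mono hle))))

/-! ### Operator lemmas -/

lemma applySingle_same {n : ℕ} (j : Fin n) (X Y : Matrix (Fin 2) (Fin 2) ℂ) (ψ : QState n) :
    applySingle j X (applySingle j Y ψ) = applySingle j (X * Y) ψ := by
  funext I
  simp only [applySingle, Finset.mul_sum, Function.update_self, Function.update_idem]
  rw [Finset.sum_comm]
  refine Finset.sum_congr rfl fun m _ => ?_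
  rw [Matrix.mul_apply, Finset.sum_mul]
  refine Finset.sum_congr rfl fun k _ => by ring

lemma applySingle_comm {n : ℕ} {j l : Fin n} (hjl : j ≠ l)
    (X Y : Matrix (Fin 2) (Fin 2) ℂ) (ψ : QState n) :
    applySingle j X (applySingle l Y ψ) = applySingle l Y (applySingle j X ψ) := by
  funext I
  simp only [applySingle, Finset.mul_sum]
  rw [Finset.sum_comm]
  refine Finset.sum_congr rfl fun m _ => Finset.sum_congr rfl fun k _ => ?_
  rw [Function.update_of_ne hjl.symm, Function.update_of_ne hjl, Function.update_comm hjl]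
  ring

lemma applySingle_subMat {n : ℕ} (j : Fin n) (X Y : Matrix (Fin 2) (Fin 2) ℂ) (ψ : QState n)
    (I : Fin n → Fin 2) :
    applySingle j (X - Y) ψ I = applySingle j X ψ I - applySingle j Y ψ I := by
  simp only [applySingle, Matrix.sub_apply, sub_mul, Finset.sum_sub_distrib]

lemma applySingle_zero_state {n : ℕ} (j : Fin n) (X : Matrix (Fin 2) (Fin 2) ℂ) :
    applySingle j X (0 : QState n) = 0 := by
  funext I
  simp [applySingle]

lemma dPhi_zero_state {n : ℕ} (x : GV n) : dPhi (0 : QState n) x = 0 := by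
  funext I
  simp [dPhi, applySingle]

lemma applySingle_dPhi {n : ℕ} (j : Fin n) (X : Matrix (Fin 2) (Fin 2) ℂ)
    (ψ : QState n) (x : GV n) (I : Fin n → Fin 2) :
    applySingle j X (dPhi ψ x) I
      = Complex.I * x.1 * applySingle j X ψ I
        + ∑ l, applySingle j X (applySingle l (x.2 l) ψ) I := by
  simp only [applySingle, dPhi, LinearMap.coe_mk, AddHom.coe_mk, Finset.mul_sum, mul_add,
    Finset.sum_add_distrib]
  congr 1
  · refine Finset.sum_congr rfl fun k _ => by ring
  · rw [Finset.sum_comm]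

lemma dPhi_gBracket {n : ℕ} (ψ : QState n) (x y : GV n) :
    dPhi ψ (gBracket x y) = dPhi (dPhi ψ y) x - dPhi (dPhi ψ x) y := by
  funext I
  have hx := fun j => applySingle_dPhi j (x.2 j) ψ y I
  have hy := fun j => applySingle_dPhi j (y.2 j) ψ x I
  simp only [dPhi, LinearMap.coe_mk, AddHom.coe_mk] at hx hy
  simp only [dPhi, gBracket, LinearMap.coe_mk, AddHom.coe_mk, Pi.sub_apply]
  rw [Finset.sum_congr rfl fun j _ => hx j, Finset.sum_congr rfl fun j _ => hy j]
  simp only [Finset.sum_add_distrib, Complex.ofReal_zero]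
  have key : (∑ j, ∑ l, applySingle j (x.2 j) (applySingle l (y.2 l) ψ) I)
      - (∑ j, ∑ l, applySingle j (y.2 j) (applySingle l (x.2 l) ψ) I)
      = ∑ j, applySingle j (⁅x.2 j, y.2 j⁆) ψ I := by
    rw [show (∑ j, ∑ l, applySingle j (y.2 j) (applySingle l (x.2 l) ψ) I)
        = ∑ j, ∑ l, applySingle l (y.2 l) (applySingle j (x.2 j) ψ) I from Finset.sum_comm,
      ← Finset.sum_sub_distrib]
    refine Finset.sum_congr rfl fun j _ => ?_
    rw [← Finset.sum_sub_distrib]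
    rw [Finset.sum_eq_single j]
    · rw [applySingle_same, applySingle_same, ← applySingle_subMat, Ring.lie_def]
    · intro l _ hlj
      rw [applySingle_comm (fun h => hlj h.symm : j ≠ l), sub_self]
    · intro h
      exact absurd (Finset.mem_univ j) h
  rw [← key]
  have e1 : Complex.I * (x.1 : ℂ) * (Complex.I * (y.1 : ℂ) * ψ I
        + ∑ l, applySingle l (y.2 l) ψ I)
      = Complex.I * (x.1 : ℂ) * (Complex.I * (y.1 : ℂ) * ψ I)
        + Complex.I * (x.1 : ℂ) * ∑ l, applySingle l (y.2 l) ψ I := by ring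
  have e2 : Complex.I * (y.1 : ℂ) * (Complex.I * (x.1 : ℂ) * ψ I
        + ∑ l, applySingle l (x.2 l) ψ I)
      = Complex.I * (y.1 : ℂ) * (Complex.I * (x.1 : ℂ) * ψ I)
        + Complex.I * (y.1 : ℂ) * ∑ l, applySingle l (x.2 l) ψ I := by ring
  rw [e1, e2, ← Finset.mul_sum, ← Finset.mul_sum]
  ring

/-- su2 is closed under commutator. -/
lemma su2_comm_mem {X Y : Matrix (Fin 2) (Fin 2) ℂ} (hX : X ∈ su2) (hY : Y ∈ su2) :
    X * Y - Y * X ∈ su2 := by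
  obtain ⟨hX1, hX2⟩ := hX
  obtain ⟨hY1, hY2⟩ := hY
  constructor
  · rw [Matrix.conjTranspose_sub, Matrix.conjTranspose_mul, Matrix.conjTranspose_mul,
      hX1, hY1, neg_mul_neg, neg_mul_neg, neg_sub]
  · rw [Matrix.trace_sub, Matrix.trace_mul_comm, sub_self]

/-- membership in gSub -/
lemma mem_gSub_iff {n : ℕ} {x : GV n} : x ∈ gSub n ↔ ∀ j, x.2 j ∈ su2 := by
  simp [gSub, Submodule.mem_prod, Submodule.mem_pi]

lemma mem_gS_iff {n : ℕ} {S : Set (Fin n)} {x : GV n} :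
    x ∈ gS S ↔ x.1 = 0 ∧ (∀ j ∈ S, x.2 j ∈ su2) ∧ (∀ j ∉ S, x.2 j = 0) := by
  simp only [gS, Submodule.mem_prod, Submodule.mem_bot, Submodule.mem_pi, Set.mem_univ,
    forall_true_left]
  constructor
  · rintro ⟨h1, h2⟩
    refine ⟨h1, fun j hj => ?_, fun j hj => ?_⟩
    · have := h2 j; rwa [if_pos hj] at this
    · have := h2 j; rwa [if_neg hj, Submodule.mem_bot] at this
  · rintro ⟨h1, h2, h3⟩
    refine ⟨h1, fun j => ?_⟩
    by_cases hj : j ∈ S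
    · rw [if_pos hj]; exact h2 j hj
    · rw [if_neg hj, Submodule.mem_bot]; exact h3 j hj

lemma mem_gBar_iff {n : ℕ} {S : Set (Fin n)} {x : GV n} :
    x ∈ gBar S ↔ (∀ j ∈ S, x.2 j = 0) ∧ (∀ j ∉ S, x.2 j ∈ su2) := by
  simp only [gBar, Submodule.mem_prod, Submodule.mem_top, true_and, Submodule.mem_pi,
    Set.mem_univ, forall_true_left]
  constructor
  · rintro h2
    refine ⟨fun j hj => ?_, fun j hj => ?_⟩
    · have := h2 j; rwa [if_pos hj, Submodule.mem_bot] at this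
    · have := h2 j; rwa [if_neg hj] at this
  · rintro ⟨h2, h3⟩ j
    by_cases hj : j ∈ S
    · rw [if_pos hj, Submodule.mem_bot]; exact h2 j hj
    · rw [if_neg hj]; exact h3 j hj

lemma mem_stab_iff {n : ℕ} {ψ : QState n} {x : GV n} :
    x ∈ stab ψ ↔ (∀ j, x.2 j ∈ su2) ∧ dPhi ψ x = 0 := by
  rw [stab, Submodule.mem_inf, LinearMap.mem_ker, mem_gSub_iff]

/-- the stabilizer is closed under the bracket -/
lemma stab_bracket {n : ℕ} {ψ : QState n} {x y : GV n}
    (hx : x ∈ stab ψ) (hy : y ∈ stab ψ) : gBracket x y ∈ stab ψ := by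
  rw [mem_stab_iff] at hx hy ⊢
  constructor
  · intro j
    have := su2_comm_mem (hx.1 j) (hy.1 j)
    rwa [← Ring.lie_def] at this
  · rw [dPhi_gBracket, hx.2, hy.2, dPhi_zero_state, dPhi_zero_state, sub_self]

/-- If `S` is an `su(2)` block for `ψ`, then `K_ψ` is the internal direct
sum of `K_ψ ∩ g_S` and `K_ψ ∩ ḡ_S`. -/
theorem stmt2 {n : ℕ} (hn : 1 ≤ n) (ψ : QState n) (hψ : ψ ≠ 0)
    (S : Set (Fin n)) (hS : Su2Block ψ S) :
    (∀ x ∈ stab ψ, ∃ y ∈ stab ψ ⊓ gS S, ∃ z ∈ stab ψ ⊓ gBar S, x = y + z) ∧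
    (stab ψ ⊓ gS S) ⊓ (stab ψ ⊓ gBar S) = ⊥ := by
  have hdisj : (stab ψ ⊓ gS S) ⊓ (stab ψ ⊓ gBar S) = ⊥ := by
    rw [eq_bot_iff]
    rintro x hx
    rw [Submodule.mem_inf, Submodule.mem_inf, Submodule.mem_inf] at hx
    obtain ⟨⟨-, hxS⟩, -, hxB⟩ := hx
    rw [mem_gS_iff] at hxS
    rw [mem_gBar_iff] at hxB
    rw [Submodule.mem_bot]
    refine Prod.ext hxS.1 (funext fun j => ?_)
    by_cases hj : j ∈ S
    · exact hxB.1 j hj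
    · exact hxS.2.2 j hj
  refine ⟨?_, hdisj⟩
  -- S is nonempty
  have hSne : S.Nonempty := by
    rw [Set.nonempty_iff_ne_empty]
    rintro rfl
    have hbot : stab ψ ⊓ gS (∅ : Set (Fin n)) = ⊥ := by
      rw [eq_bot_iff]
      intro x hxm
      replace hxm : x ∈ stab ψ ⊓ gS (∅ : Set (Fin n)) := hxm
      rw [Submodule.mem_inf, mem_gS_iff] at hxm
      obtain ⟨-, hx⟩ := hxm
      rw [Submodule.mem_bot]
      exact Prod.ext hx.1 (funext fun j => hx.2.2 j (Set.notMem_empty j))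
    have h1 := hS.1
    rw [hbot] at h1
    simp at h1
  -- injectivity of the projections on m := stab ψ ⊓ gS S
  have hinj : ∀ j ∈ S, ∀ a ∈ stab ψ ⊓ gS S, a.2 j = 0 → a = 0 := by
    intro j hj a ha haj
    have hmem : a ∈ stab ψ ⊓ gS (S \ {j}) := by
      rw [Submodule.mem_inf] at ha ⊢
      refine ⟨ha.1, ?_⟩
      rw [mem_gS_iff] at ha ⊢
      obtain ⟨-, h1, h2, h3⟩ := ha
      refine ⟨h1, fun l hl => h2 l hl.1, fun l hl => ?_⟩
      by_cases hlS : l ∈ S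
      · have : l = j := by
          by_contra hne
          exact hl ⟨hlS, hne⟩
        rw [this]; exact haj
      · exact h3 l hlS
    have hzero : stab ψ ⊓ gS (S \ {j}) = ⊥ :=
      Submodule.finrank_eq_zero.mp (hS.2 (S \ {j}) (Set.sdiff_singleton_ssubset.mpr hj))
    rw [hzero, Submodule.mem_bot] at hmem
    exact hmem
  -- m is closed under the bracket
  have hmbr : ∀ a ∈ stab ψ ⊓ gS S, ∀ b ∈ stab ψ ⊓ gS S,
      gBracket a b ∈ stab ψ ⊓ gS S := by
    intro a ha b hb
    rw [Submodule.mem_inf] at ha hb ⊢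
    refine ⟨stab_bracket ha.1 hb.1, ?_⟩
    rw [mem_gS_iff] at ha hb ⊢
    refine ⟨rfl, fun j hj => ?_, fun j hj => ?_⟩
    · have := su2_comm_mem (ha.2.2.1 j hj) (hb.2.2.1 j hj)
      rwa [← Ring.lie_def] at this
    · show ⁅a.2 j, b.2 j⁆ = 0
      rw [ha.2.2.2 j hj]; simp only [Ring.lie_def, zero_mul, mul_zero, sub_zero]
  -- the image of m under each projection (j ∈ S) is all of su2
  have hmap : ∀ j ∈ S, (stab ψ ⊓ gS S).map (Pj j) = su2 := by
    intro j hj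
    apply su2_subalg
    · rintro _ ⟨a, ha, rfl⟩
      replace ha : a ∈ stab ψ ⊓ gS S := ha
      rw [Submodule.mem_inf, mem_gS_iff] at ha
      exact ha.2.2.1 j hj
    · rintro _ ⟨a, ha, rfl⟩ _ ⟨b, hb, rfl⟩
      replace ha : a ∈ stab ψ ⊓ gS S := ha
      replace hb : b ∈ stab ψ ⊓ gS S := hb
      refine ⟨gBracket a b, hmbr a ha b hb, ?_⟩
      show ⁅a.2 j, b.2 j⁆ = _
      rw [Ring.lie_def]
      rfl
    · -- finrank of the image equals finrank of m
      have hinj' : Function.Injective ((Pj j).comp (stab ψ ⊓ gS S).subtype) := by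
        rw [← LinearMap.ker_eq_bot, eq_bot_iff]
        rintro ⟨a, ha⟩ hker
        rw [LinearMap.mem_ker] at hker
        have : a = 0 := hinj j hj a ha hker
        simp [this]
      have hrange : LinearMap.range ((Pj j).comp (stab ψ ⊓ gS S).subtype)
          = (stab ψ ⊓ gS S).map (Pj j) := by
        rw [LinearMap.range_comp, Submodule.range_subtype]
      have := LinearMap.finrank_range_of_inj hinj'
      rw [hrange] at this
      rw [this]
      exact hS.1
  -- main construction
  intro x hx
  obtain ⟨j0, hj0⟩ := hSne
  have hxg := (Submodule.mem_inf.mp hx).1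
  rw [mem_gSub_iff] at hxg
  have hx20 : x.2 j0 ∈ (stab ψ ⊓ gS S).map (Pj j0) := by
    rw [hmap j0 hj0]; exact hxg j0
  obtain ⟨y, hym, hyx⟩ := hx20
  replace hym : y ∈ stab ψ ⊓ gS S := hym
  have hyx : y.2 j0 = x.2 j0 := hyx
  -- y agrees with x on S
  have hagree : ∀ j ∈ S, y.2 j = x.2 j := by
    intro j hj
    have hy_su2 : y.2 j ∈ su2 := by
      have := (Submodule.mem_inf.mp hym).2
      rw [mem_gS_iff] at this
      exact this.2.1 j hj
    have hsub : x.2 j - y.2 j ∈ su2 := sub_mem (hxg j) hy_su2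
    have hcent : ∀ u ∈ su2, (x.2 j - y.2 j) * u - u * (x.2 j - y.2 j) = 0 := by
      intro u hu
      rw [← hmap j hj] at hu
      obtain ⟨a, ham, hau⟩ := hu
      replace ham : a ∈ stab ψ ⊓ gS S := ham
      have hau : a.2 j = u := hau
      -- both brackets lie in m
      have ham' : a ∈ stab ψ := (Submodule.mem_inf.mp ham).1
      have haS : a ∈ gS S := (Submodule.mem_inf.mp ham).2
      have hem : gBracket x a ∈ stab ψ ⊓ gS S := by
        rw [Submodule.mem_inf]
        refine ⟨stab_bracket hx ham', ?_⟩
        rw [mem_gS_iff] at haS ⊢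
        refine ⟨rfl, fun l hl => ?_, fun l hl => ?_⟩
        · have := su2_comm_mem (hxg l) (haS.2.1 l hl)
          rwa [← Ring.lie_def] at this
        · show ⁅x.2 l, a.2 l⁆ = 0
          rw [haS.2.2 l hl]; simp only [Ring.lie_def, zero_mul, mul_zero, sub_zero]
      have he'm : gBracket y a ∈ stab ψ ⊓ gS S := hmbr y hym a ham
      have heq : gBracket x a = gBracket y a := by
        have hd : gBracket x a - gBracket y a ∈ stab ψ ⊓ gS S := sub_mem hem he'm
        have hdj0 : (gBracket x a - gBracket y a).2 j0 = 0 := by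
          show ⁅x.2 j0, a.2 j0⁆ - ⁅y.2 j0, a.2 j0⁆ = 0
          rw [hyx, sub_self]
        have := hinj j0 hj0 _ hd hdj0
        exact sub_eq_zero.mp this
      have hj' : ⁅x.2 j, a.2 j⁆ = ⁅y.2 j, a.2 j⁆ := congrFun (congrArg Prod.snd heq) j
      rw [Ring.lie_def, Ring.lie_def, hau] at hj'
      calc (x.2 j - y.2 j) * u - u * (x.2 j - y.2 j)
          = (x.2 j * u - u * x.2 j) - (y.2 j * u - u * y.2 j) := by noncomm_ring
        _ = 0 := by rw [hj', sub_self]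
    have := su2_centerless hsub hcent
    exact (sub_eq_zero.mp this).symm
  -- assemble
  refine ⟨y, hym, x - y, ?_, by abel⟩
  rw [Submodule.mem_inf]
  have hystab : y ∈ stab ψ := (Submodule.mem_inf.mp hym).1
  refine ⟨sub_mem hx hystab, ?_⟩
  rw [mem_gBar_iff]
  constructor
  · intro j hj
    show x.2 j - y.2 j = 0
    rw [hagree j hj, sub_self]
  · intro j hj
    have hy0 : y.2 j = 0 := by
      have := (Submodule.mem_inf.mp hym).2
      rw [mem_gS_iff] at this
      exact this.2.2 j hj
    show x.2 j - y.2 j ∈ su2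
    rw [hy0, sub_zero]
    exact hxg j
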